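/- Let c > 0, T > 0, let g : [0,T] → [e, ∞) be continuous and let h : [0,T] → [0, ∞) be integrable. If g(t) ≤ g(0) · exp( c ∫₀^t ( 1 + h(s) ln g(s) ) ds ) for all t ∈ [0,T], then for all t ∈ [0,T], ln g(t) ≤ ( ln g(0) + cT ) · exp( c ∫₀^t h(s) ds ). -/

import Mathlib

open MeasureTheory Real Filter Set

noncomputable section

abbrev E2 := EuclideanSpace ℝ (Fin 2)
abbrev E3 := EuclideanSpace ℝ (Fin 3)

/-- L^∞ norm (supremum of pointwise norms). -/
def supNorm {F : Type*} [NormedAddCommGroup F] (v : E2 → F) : ℝ := ⨆ x, ‖v x‖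

/-- Sobolev W^{k,2} norm via iterated derivatives. -/
def sobNorm {F : Type*} [NormedAddCommGroup F] [NormedSpace ℝ F] (k : ℕ) (v : E2 → F) : ℝ :=
  (∑ i ∈ Finset.range (k + 1), ∫ x : E2, ‖iteratedFDeriv ℝ i v x‖ ^ 2) ^ ((1:ℝ)/2)

/-- partial derivative in the i-th coordinate direction -/
def pd (i : Fin 2) (f : E2 → ℝ) (x : E2) : ℝ := fderiv ℝ f x (EuclideanSpace.single i 1)

/-- two-dimensional Laplacian -/
def lap (f : E2 → ℝ) (x : E2) : ℝ := pd 0 (pd 0 f) x + pd 1 (pd 1 f) x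

/-- perpendicular gradient ∇⊥ f = (-∂₂ f, ∂₁ f) -/
def perpGrad (f : E2 → ℝ) (x : E2) : E2 := WithLp.toLp 2 ![-pd 1 f x, pd 0 f x]

/-- advection term u · ∇ f -/
def adv (u : E2 → E2) (f : E2 → ℝ) (x : E2) : ℝ := ∑ i, u x i * pd i f x

/-- divergence free vector field -/
def divFree (u : E2 → E2) : Prop :=
  ∀ x, (∑ i : Fin 2, fderiv ℝ (fun y => u y i) x (EuclideanSpace.single i 1)) = 0

/-- solution of the screened Poisson equation via the free-space Green's function -/
def greenPsi (w : E2 → ℝ) (x : E2) : ℝ :=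
  (1 / (4 * π)) * ∫ y : E2,
    (∫ r : ℝ, Real.exp (-Real.sqrt (‖x - y‖ ^ 2 + r ^ 2)) / Real.sqrt (‖x - y‖ ^ 2 + r ^ 2)) * w y

def isSchwartz (f : E2 → ℝ) : Prop := ∃ φ : SchwartzMap E2 ℝ, ∀ x, f x = φ x

def lnPlus (a : ℝ) : ℝ := if 1 ≤ a then Real.log a else 0


/-- Grönwall-type lemma for a continuous kernel. -/
lemma gronwall_cont (T B : ℝ) (K φ : ℝ → ℝ) (hK : Continuous K) (hK0 : ∀ s, 0 ≤ K s)
    (hφ : Continuous φ)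
    (hle : ∀ t ∈ Set.Icc 0 T, φ t ≤ B + ∫ s in (0:ℝ)..t, K s * φ s) :
    ∀ t ∈ Set.Icc 0 T, φ t ≤ B * Real.exp (∫ s in (0:ℝ)..t, K s) := by
  set F : ℝ → ℝ := fun t => B + ∫ s in (0:ℝ)..t, K s * φ s with hFdef
  set Ψ : ℝ → ℝ := fun t => ∫ s in (0:ℝ)..t, K s with hΨdef
  have hKφ : Continuous (fun s => K s * φ s) := hK.mul hφ
  have hF : ∀ t, HasDerivAt F (K t * φ t) t := by
    intro t
    have h1 := intervalIntegral.integral_hasDerivAt_right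
      (hKφ.intervalIntegrable 0 t)
      (hKφ.stronglyMeasurableAtFilter volume (nhds t)) hKφ.continuousAt
    exact h1.const_add B
  have hΨ : ∀ t, HasDerivAt Ψ (K t) t := by
    intro t
    exact intervalIntegral.integral_hasDerivAt_right
      (hK.intervalIntegrable 0 t)
      (hK.stronglyMeasurableAtFilter volume (nhds t)) hK.continuousAt
  set H : ℝ → ℝ := fun t => F t * Real.exp (-Ψ t) with hHdef
  have hH : ∀ t, HasDerivAt H ((K t * φ t - K t * F t) * Real.exp (-Ψ t)) t := by
    intro t
    have h1 : HasDerivAt (fun y => F y * Real.exp (-Ψ y))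
        (K t * φ t * Real.exp (-Ψ t) + F t * (Real.exp (-Ψ t) * -K t)) t :=
      (hF t).mul ((hΨ t).neg.exp)
    convert h1 using 1
    ring
  have hmono : AntitoneOn H (Set.Icc 0 T) := by
    apply antitoneOn_of_deriv_nonpos (convex_Icc 0 T)
    · exact (fun t _ => (hH t).differentiableAt.continuousAt.continuousWithinAt)
    · intro t _; exact (hH t).differentiableAt.differentiableWithinAt
    · intro t ht
      rw [interior_Icc] at ht
      rw [(hH t).deriv]
      apply mul_nonpos_of_nonpos_of_nonneg
      · have hφF : φ t ≤ F t := hle t (Set.Ioo_subset_Icc_self ht)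
        have := mul_le_mul_of_nonneg_left hφF (hK0 t)
        linarith
      · exact (Real.exp_pos _).le
  intro t ht
  have h0 : H t ≤ H 0 := hmono (Set.left_mem_Icc.mpr (ht.1.trans ht.2)) ht ht.1
  have hH0 : H 0 = B := by
    simp [hHdef, hFdef, hΨdef]
  have hFt : F t ≤ B * Real.exp (Ψ t) := by
    rw [hH0] at h0
    have := mul_le_mul_of_nonneg_right h0 (Real.exp_pos (Ψ t)).le
    rwa [hHdef, mul_assoc, ← Real.exp_add, neg_add_cancel, Real.exp_zero, mul_one] at this
  exact (hle t ht).trans hFt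

/-- logarithmic Grönwall-type lemma. -/
theorem log_gronwall
    (c T : ℝ) (g h : ℝ → ℝ)
    (hc : 0 < c) (hT : 0 < T)
    (hgcont : ContinuousOn g (Set.Icc 0 T))
    (hge : ∀ t ∈ Set.Icc (0:ℝ) T, Real.exp 1 ≤ g t)
    (hh0 : ∀ t ∈ Set.Icc (0:ℝ) T, 0 ≤ h t)
    (hhint : IntegrableOn h (Set.Icc 0 T))
    (hbound : ∀ t ∈ Set.Icc (0:ℝ) T,
      g t ≤ g 0 * Real.exp (c * ∫ s in (0:ℝ)..t, (1 + h s * Real.log (g s)))) :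
    ∀ t ∈ Set.Icc (0:ℝ) T,
      Real.log (g t) ≤ (Real.log (g 0) + c * T) * Real.exp (c * ∫ s in (0:ℝ)..t, h s) := by
  -- clamp map
  set pr : ℝ → ℝ := fun s => min (max s 0) T with hprdef
  have hprmem : ∀ s, pr s ∈ Set.Icc 0 T := fun s =>
    ⟨le_min (le_max_right s 0) hT.le, min_le_right _ _⟩
  have hprid : ∀ s ∈ Set.Icc (0:ℝ) T, pr s = s := by
    intro s hs; simp [hprdef, max_eq_left hs.1, min_eq_left hs.2]
  set φ : ℝ → ℝ := fun s => Real.log (g (pr s)) with hφdef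
  have hgpos : ∀ s ∈ Set.Icc (0:ℝ) T, 0 < g s := fun s hs =>
    lt_of_lt_of_le (Real.exp_pos 1) (hge s hs)
  have hφcont : Continuous φ := by
    apply Continuous.log
    · exact hgcont.comp_continuous (by fun_prop) hprmem
    · exact fun s => (hgpos _ (hprmem s)).ne'
  have hφeq : ∀ s ∈ Set.Icc (0:ℝ) T, φ s = Real.log (g s) := by
    intro s hs; simp [hφdef, hprid s hs]
  -- bound M on |φ| over Icc
  obtain ⟨M, hM⟩ := (isCompact_Icc (a := (0:ℝ)) (b := T)).exists_bound_of_continuousOn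
    hφcont.continuousOn
  have hM0 : 0 ≤ M := le_trans (norm_nonneg _) (hM 0 (Set.left_mem_Icc.mpr hT.le))
  set A : ℝ := Real.log (g 0) + c * T with hAdef
  have hlg0 : 1 ≤ Real.log (g 0) := by
    have := hge 0 (Set.left_mem_Icc.mpr hT.le)
    calc (1:ℝ) = Real.log (Real.exp 1) := (Real.log_exp 1).symm
    _ ≤ Real.log (g 0) := Real.log_le_log (Real.exp_pos 1) this
  have hA0 : 0 ≤ A := by nlinarith [mul_pos hc hT]
  -- Step 1 : φ t ≤ A + ∫ (c h) φ on Icc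
  have hstep1 : ∀ t ∈ Set.Icc (0:ℝ) T,
      φ t ≤ A + ∫ s in (0:ℝ)..t, (c * h s) * φ s := by
    intro t ht
    have hIh : IntervalIntegrable h volume 0 t := by
      rw [intervalIntegrable_iff_integrableOn_Icc_of_le ht.1]
      exact hhint.mono_set (Set.Icc_subset_Icc le_rfl ht.2)
    have hIhφ : IntervalIntegrable (fun s => h s * φ s) volume 0 t :=
      hIh.mul_continuousOn hφcont.continuousOn
    have hcongr : (∫ s in (0:ℝ)..t, (1 + h s * Real.log (g s)))
        = ∫ s in (0:ℝ)..t, (1 + h s * φ s) := by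
      apply intervalIntegral.integral_congr
      intro s hs
      rw [Set.uIcc_of_le ht.1] at hs
      simp only []
      rw [hφeq s (Set.Icc_subset_Icc le_rfl ht.2 hs)]
    have hsplit : (∫ s in (0:ℝ)..t, (1 + h s * φ s))
        = t + ∫ s in (0:ℝ)..t, h s * φ s := by
      rw [intervalIntegral.integral_add intervalIntegrable_const hIhφ]
      simp
    have hlog : Real.log (g t) ≤ Real.log (g 0)
        + c * ∫ s in (0:ℝ)..t, (1 + h s * Real.log (g s)) := by
      have h1 := Real.log_le_log (hgpos t ht) (hbound t ht)
      rwa [Real.log_mul (hgpos 0 (Set.left_mem_Icc.mpr hT.le)).ne' (Real.exp_ne_zero _),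
        Real.log_exp] at h1
    rw [hcongr, hsplit] at hlog
    have hconst : c * ∫ s in (0:ℝ)..t, h s * φ s
        = ∫ s in (0:ℝ)..t, (c * h s) * φ s := by
      rw [← intervalIntegral.integral_const_mul]
      simp [mul_assoc]
    have : c * t ≤ c * T := mul_le_mul_of_nonneg_left ht.2 hc.le
    rw [hφeq t ht]
    calc Real.log (g t) ≤ Real.log (g 0) + c * (t + ∫ s in (0:ℝ)..t, h s * φ s) := hlog
      _ = Real.log (g 0) + c * t + c * ∫ s in (0:ℝ)..t, h s * φ s := by ring
      _ ≤ A + ∫ s in (0:ℝ)..t, (c * h s) * φ s := by rw [← hconst, hAdef]; linarith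
  -- Step 2 : ε-approximation of the kernel by a continuous one
  have hkey : ∀ ε > (0:ℝ), ∀ t ∈ Set.Icc (0:ℝ) T,
      φ t ≤ (A + M * ε) * Real.exp (c * (∫ s in (0:ℝ)..t, h s) + ε) := by
    intro ε hε
    have hchint : IntegrableOn (fun s => c * h s) (Set.Icc 0 T) := hhint.const_mul c
    set f : ℝ → ℝ := (Set.Icc (0:ℝ) T).indicator (fun s => c * h s) with hfdef
    have hfint : Integrable f := (integrable_indicator_iff measurableSet_Icc).mpr hchint
    obtain ⟨Kt, -, hKtε, hKtcont, hKtint⟩ := hfint.exists_hasCompactSupport_integral_sub_le hε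
    set Kc : ℝ → ℝ := fun s => max (Kt s) 0 with hKcdef
    have hKccont : Continuous Kc := hKtcont.max continuous_const
    have hKc0 : ∀ s, 0 ≤ Kc s := fun s => le_max_right _ _
    have hptw : ∀ s ∈ Set.Icc (0:ℝ) T, |c * h s - Kc s| ≤ ‖f s - Kt s‖ := by
      intro s hs
      have hf : f s = c * h s := Set.indicator_of_mem hs _
      rw [hf, Real.norm_eq_abs]
      have hch0 : 0 ≤ c * h s := mul_nonneg hc.le (hh0 s hs)
      rcases le_total 0 (Kt s) with h'|h'
      · rw [hKcdef]; simp [max_eq_left h']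
      · rw [hKcdef]
        simp only [max_eq_right h', sub_zero]
        rw [abs_of_nonneg hch0, abs_of_nonneg (by linarith : (0:ℝ) ≤ c * h s - Kt s)]
        linarith
    have hKcIcc : IntegrableOn Kc (Set.Icc (0:ℝ) T) := hKccont.integrableOn_Icc
    have hdiffint : IntegrableOn (fun s => |c * h s - Kc s|) (Set.Icc (0:ℝ) T) :=
      (hchint.sub hKcIcc).abs
    have hkeyint : (∫ s in Set.Icc (0:ℝ) T, |c * h s - Kc s|) ≤ ε := by
      calc (∫ s in Set.Icc (0:ℝ) T, |c * h s - Kc s|)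
          ≤ ∫ s in Set.Icc (0:ℝ) T, ‖f s - Kt s‖ :=
            setIntegral_mono_on hdiffint (hfint.sub hKtint).norm.integrableOn
              measurableSet_Icc hptw
        _ ≤ ∫ s, ‖f s - Kt s‖ := setIntegral_le_integral (hfint.sub hKtint).norm
              (Filter.Eventually.of_forall fun s => norm_nonneg _)
        _ ≤ ε := hKtε
    -- interval-integral facts for each t
    have habs_le : ∀ t ∈ Set.Icc (0:ℝ) T,
        (∫ s in (0:ℝ)..t, |c * h s - Kc s|) ≤ ε := by
      intro t ht
      rw [intervalIntegral.integral_of_le ht.1]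
      have hsub : Set.Ioc (0:ℝ) t ⊆ Set.Icc (0:ℝ) T := fun s hs => ⟨hs.1.le, hs.2.trans ht.2⟩
      calc (∫ s in Set.Ioc (0:ℝ) t, |c * h s - Kc s|)
          ≤ ∫ s in Set.Icc (0:ℝ) T, |c * h s - Kc s| := by
            apply setIntegral_mono_set hdiffint
            · exact Filter.Eventually.of_forall fun s => abs_nonneg _
            · exact HasSubset.Subset.eventuallyLE hsub
        _ ≤ ε := hkeyint
    have hIK : ∀ t ∈ Set.Icc (0:ℝ) T, IntervalIntegrable (fun s => c * h s) volume 0 t := by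
      intro t ht
      rw [intervalIntegrable_iff_integrableOn_Icc_of_le ht.1]
      exact hchint.mono_set (Set.Icc_subset_Icc le_rfl ht.2)
    -- (i): replace kernel in the weighted integral
    have hi : ∀ t ∈ Set.Icc (0:ℝ) T,
        (∫ s in (0:ℝ)..t, (c * h s) * φ s) ≤ M * ε + ∫ s in (0:ℝ)..t, Kc s * φ s := by
      intro t ht
      have hIKφ : IntervalIntegrable (fun s => (c * h s) * φ s) volume 0 t :=
        (hIK t ht).mul_continuousOn hφcont.continuousOn
      have hIKcφ : IntervalIntegrable (fun s => Kc s * φ s) volume 0 t :=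
        (hKccont.mul hφcont).intervalIntegrable 0 t
      have hIabs : IntervalIntegrable (fun s => |c * h s - Kc s|) volume 0 t :=
        ((hIK t ht).sub (hKccont.intervalIntegrable 0 t)).abs
      have hmono : ∀ s ∈ Set.Icc (0:ℝ) t,
          (c * h s) * φ s - Kc s * φ s ≤ |c * h s - Kc s| * M := by
        intro s hs
        have hsT : s ∈ Set.Icc (0:ℝ) T := Set.Icc_subset_Icc le_rfl ht.2 hs
        have h1 : (c * h s - Kc s) * φ s ≤ |c * h s - Kc s| * |φ s| := by
          calc (c * h s - Kc s) * φ s ≤ |(c * h s - Kc s) * φ s| := le_abs_self _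
            _ = |c * h s - Kc s| * |φ s| := abs_mul _ _
        have h2 : |φ s| ≤ M := by rw [← Real.norm_eq_abs]; exact hM s hsT
        nlinarith [abs_nonneg (c * h s - Kc s)]
      have hint1 : (∫ s in (0:ℝ)..t, ((c * h s) * φ s - Kc s * φ s))
          ≤ ∫ s in (0:ℝ)..t, |c * h s - Kc s| * M :=
        intervalIntegral.integral_mono_on ht.1 (hIKφ.sub hIKcφ) (hIabs.mul_const M) hmono
      have hint2 : (∫ s in (0:ℝ)..t, |c * h s - Kc s| * M)
          = (∫ s in (0:ℝ)..t, |c * h s - Kc s|) * M := by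
        rw [intervalIntegral.integral_mul_const]
      have hint3 : (∫ s in (0:ℝ)..t, ((c * h s) * φ s - Kc s * φ s))
          = (∫ s in (0:ℝ)..t, (c * h s) * φ s) - ∫ s in (0:ℝ)..t, Kc s * φ s :=
        intervalIntegral.integral_sub hIKφ hIKcφ
      have h4 : (∫ s in (0:ℝ)..t, |c * h s - Kc s|) * M ≤ ε * M :=
        mul_le_mul_of_nonneg_right (habs_le t ht) hM0
      rw [hint3] at hint1
      rw [hint2] at hint1
      nlinarith
    -- (ii): compare plain integrals
    have hii : ∀ t ∈ Set.Icc (0:ℝ) T,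
        (∫ s in (0:ℝ)..t, Kc s) ≤ (∫ s in (0:ℝ)..t, c * h s) + ε := by
      intro t ht
      have hIKc : IntervalIntegrable Kc volume 0 t := hKccont.intervalIntegrable 0 t
      have hIabs : IntervalIntegrable (fun s => |c * h s - Kc s|) volume 0 t :=
        ((hIK t ht).sub hIKc).abs
      have hmono : ∀ s ∈ Set.Icc (0:ℝ) t, Kc s - c * h s ≤ |c * h s - Kc s| := by
        intro s _
        rw [abs_sub_comm]
        exact le_abs_self _
      have hint1 : (∫ s in (0:ℝ)..t, (Kc s - c * h s))
          ≤ ∫ s in (0:ℝ)..t, |c * h s - Kc s| :=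
        intervalIntegral.integral_mono_on ht.1 (hIKc.sub (hIK t ht)) hIabs hmono
      have hint3 : (∫ s in (0:ℝ)..t, (Kc s - c * h s))
          = (∫ s in (0:ℝ)..t, Kc s) - ∫ s in (0:ℝ)..t, c * h s :=
        intervalIntegral.integral_sub hIKc (hIK t ht)
      rw [hint3] at hint1
      linarith [habs_le t ht]
    -- apply the continuous-kernel Gronwall lemma
    have hgron := gronwall_cont T (A + M * ε) Kc φ hKccont hKc0 hφcont
      (fun t ht => by
        have := hstep1 t ht
        have := hi t ht
        linarith)
    intro t ht
    have h5 := hgron t ht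
    have h6 : (∫ s in (0:ℝ)..t, Kc s) ≤ c * (∫ s in (0:ℝ)..t, h s) + ε := by
      have := hii t ht
      rwa [intervalIntegral.integral_const_mul] at this
    have h7 : Real.exp (∫ s in (0:ℝ)..t, Kc s)
        ≤ Real.exp (c * (∫ s in (0:ℝ)..t, h s) + ε) := Real.exp_le_exp.mpr h6
    have h8 : 0 ≤ A + M * ε := by positivity
    calc φ t ≤ (A + M * ε) * Real.exp (∫ s in (0:ℝ)..t, Kc s) := h5
      _ ≤ (A + M * ε) * Real.exp (c * (∫ s in (0:ℝ)..t, h s) + ε) :=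
        mul_le_mul_of_nonneg_left h7 h8
  -- let ε → 0⁺
  intro t ht
  rw [← hφeq t ht]
  have hlim : Tendsto (fun ε : ℝ => (A + M * ε) * Real.exp (c * (∫ s in (0:ℝ)..t, h s) + ε))
      (nhdsWithin 0 (Set.Ioi 0)) (nhds (A * Real.exp (c * ∫ s in (0:ℝ)..t, h s))) := by
    have hcont : Continuous fun ε : ℝ =>
        (A + M * ε) * Real.exp (c * (∫ s in (0:ℝ)..t, h s) + ε) := by fun_prop
    have h0 := (hcont.tendsto 0).mono_left (nhdsWithin_le_nhds (s := Set.Ioi (0:ℝ)))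
    simpa using h0
  exact ge_of_tendsto hlim
    (eventually_nhdsWithin_of_forall (fun ε hε => hkey ε hε t ht))
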